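/- With q(t), p(t) as in the previous statement (a₁ > |A₁|, Ω, Ω₁ > 0), the quantity H₁(t) := ½((p(t)q(t))² + Ω²(log q(t))²) equals a₁ + A₁cos(Ω₁t+δ₁) for all t. -/

import Mathlib

open Real

theorem stmt_12 (Ω Ω₁ a₁ A₁ δ₁ : ℝ) (hΩ : 0 < Ω) (hΩ₁ : 0 < Ω₁) (ha : |A₁| < a₁)
    (p q : ℝ → ℝ)
    (hq : q = fun t => Real.exp ((1 / Ω) * Real.sqrt (2 * a₁ + 2 * A₁ * Real.cos (Ω₁ * t + δ₁))
      * Real.sin ((Ω * A₁ / Ω₁) * Real.sin (Ω₁ * t + δ₁))))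
    (hp : p = fun t => Real.sqrt (2 * a₁ + 2 * A₁ * Real.cos (Ω₁ * t + δ₁))
      * Real.cos ((Ω * A₁ / Ω₁) * Real.sin (Ω₁ * t + δ₁)) / q t) :
    ∀ t : ℝ, (1 / 2) * ((p t * q t) ^ 2 + Ω ^ 2 * (Real.log (q t)) ^ 2)
      = a₁ + A₁ * Real.cos (Ω₁ * t + δ₁) := by
  intro t
  have hE : 0 ≤ 2 * a₁ + 2 * A₁ * Real.cos (Ω₁ * t + δ₁) := by
    nlinarith [neg_abs_le A₁, le_abs_self A₁, Real.neg_one_le_cos (Ω₁ * t + δ₁),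
      Real.cos_le_one (Ω₁ * t + δ₁)]
  have hq0 : q t ≠ 0 := by
    rw [hq]; exact (Real.exp_pos _).ne'
  have hlog : Real.log (q t) = (1 / Ω) * Real.sqrt (2 * a₁ + 2 * A₁ * Real.cos (Ω₁ * t + δ₁))
      * Real.sin ((Ω * A₁ / Ω₁) * Real.sin (Ω₁ * t + δ₁)) := by
    rw [hq]; exact Real.log_exp _
  have hpq : p t * q t = Real.sqrt (2 * a₁ + 2 * A₁ * Real.cos (Ω₁ * t + δ₁))
      * Real.cos ((Ω * A₁ / Ω₁) * Real.sin (Ω₁ * t + δ₁)) := by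
    rw [hp]; field_simp
  rw [hpq, hlog]
  have hsq : Real.sqrt (2 * a₁ + 2 * A₁ * Real.cos (Ω₁ * t + δ₁)) ^ 2
      = 2 * a₁ + 2 * A₁ * Real.cos (Ω₁ * t + δ₁) := Real.sq_sqrt hE
  have hpy := Real.sin_sq_add_cos_sq ((Ω * A₁ / Ω₁) * Real.sin (Ω₁ * t + δ₁))
  set θ := (Ω * A₁ / Ω₁) * Real.sin (Ω₁ * t + δ₁) with hθ
  have hΩ' : Ω ≠ 0 := hΩ.ne'
  field_simp
  nlinarith [hsq, hpy, Real.sq_sqrt (show (0:ℝ) ≤ 2 * (a₁ + A₁ * Real.cos (Ω₁ * t + δ₁)) by linarith)]
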